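/- Let λ, τ ∈ ℝ with λ < τ and set d := τ - λ > 0. Then for all β > 0, |(2/β)·log(1 - f_β(λ-τ)) - 2(λ - τ)| ≤ (2/β)·(1 - e^{-βd})^{-1}·e^{-βd}, where f_β(ε) = 1/(1+e^{βε}). -/

import Mathlib

/-- Exponential convergence below the chemical potential: for `λ < τ`, `d = τ - λ`,
`|(2/β)·log(1 - f_β(λ-τ)) - 2(λ-τ)| ≤ (2/β)·(1 - e^{-βd})⁻¹·e^{-βd}`. -/
theorem grand_potential_integrand_below (lam τ : ℝ) (h : lam < τ) (β : ℝ) (hβ : 0 < β) :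
    |(2 / β) * Real.log (1 - 1 / (1 + Real.exp (β * (lam - τ)))) - 2 * (lam - τ)|
      ≤ (2 / β) * (1 - Real.exp (-(β * (τ - lam))))⁻¹ * Real.exp (-(β * (τ - lam))) := by
  set t := Real.exp (-(β * (τ - lam))) with ht
  have htpos : 0 < t := Real.exp_pos _
  have ht1 : t < 1 := by
    rw [ht, Real.exp_lt_one_iff]
    nlinarith
  have hx : β * (lam - τ) = -(β * (τ - lam)) := by ring
  have h1t : (0:ℝ) < 1 + t := by linarith
  have key : 1 - 1 / (1 + t) = t / (1 + t) := by
    field_simp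
    ring
  have hlog : Real.log (1 - 1 / (1 + t)) = -(β * (τ - lam)) - Real.log (1 + t) := by
    rw [key, Real.log_div (ne_of_gt htpos) (ne_of_gt h1t), ht, Real.log_exp]
  rw [hx, hlog]
  have hβ' : β ≠ 0 := ne_of_gt hβ
  have heq : 2 / β * (-(β * (τ - lam)) - Real.log (1 + t)) - 2 * (lam - τ)
      = -(2 / β * Real.log (1 + t)) := by
    field_simp
    ring
  rw [heq, abs_neg, abs_of_nonneg]
  · have hlogle : Real.log (1 + t) ≤ t := by
      have := Real.log_le_sub_one_of_pos h1t
      linarith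
    have h1 : 2 / β * Real.log (1 + t) ≤ 2 / β * t :=
      mul_le_mul_of_nonneg_left hlogle (by positivity)
    have h2 : (1:ℝ) ≤ (1 - t)⁻¹ := by
      rw [le_inv_comm₀] <;> linarith
    calc 2 / β * Real.log (1 + t) ≤ 2 / β * t := h1
      _ = 2 / β * 1 * t := by ring
      _ ≤ 2 / β * (1 - t)⁻¹ * t := by gcongr
  · exact mul_nonneg (by positivity) (Real.log_nonneg (by linarith))
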